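/- Let A ∈ ℝ^{m×n}, W ∈ ℝ^{p×n}, α > 0, and y ∈ ℝ^m. If x̂₁ and x̂₂ are both minimizers of J(x) = ‖Ax − y‖₂² + α‖Wx‖₁, then Ax̂₁ = Ax̂₂ and ‖Wx̂₁‖₁ = ‖Wx̂₂‖₁. -/

import Mathlib

/-- Any two minimizers of the generalized LASSO objective
`J(x) = ‖Ax − y‖² + α‖Wx‖₁` have the same image under `A` and the same `ℓ₁`
regularization value. -/
theorem glasso_minimizers_same_fit
    (m n p : ℕ)
    (A : EuclideanSpace ℝ (Fin n) →L[ℝ] EuclideanSpace ℝ (Fin m))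
    (W : EuclideanSpace ℝ (Fin n) →L[ℝ] EuclideanSpace ℝ (Fin p))
    (α : ℝ) (hα : 0 < α) (y : EuclideanSpace ℝ (Fin m))
    (x1 x2 : EuclideanSpace ℝ (Fin n))
    (hmin1 : ∀ x, ‖A x1 - y‖^2 + α * ∑ i, |W x1 i|
                  ≤ ‖A x - y‖^2 + α * ∑ i, |W x i|)
    (hmin2 : ∀ x, ‖A x2 - y‖^2 + α * ∑ i, |W x2 i|
                  ≤ ‖A x - y‖^2 + α * ∑ i, |W x i|) :
    A x1 = A x2 ∧ (∑ i, |W x1 i|) = ∑ i, |W x2 i| := by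
  set a := A x1 - y with ha
  set b := A x2 - y with hb
  set s1 := ∑ i, |W x1 i| with hs1
  set s2 := ∑ i, |W x2 i| with hs2
  have hobj : ‖a‖^2 + α * s1 = ‖b‖^2 + α * s2 := le_antisymm (hmin1 x2) (hmin2 x1)
  set xm : EuclideanSpace ℝ (Fin n) := (1/2 : ℝ) • (x1 + x2) with hxm
  have hAm : A xm - y = (1/2 : ℝ) • (a + b) := by
    rw [ha, hb, hxm, map_smul, map_add]
    module
  have hWm : ∀ i, |W xm i| ≤ (|W x1 i| + |W x2 i|) / 2 := by
    intro i
    have h1 : W xm i = (1/2 : ℝ) * (W x1 i + W x2 i) := by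
      rw [hxm, map_smul, map_add]
      simp [PiLp.smul_apply, PiLp.add_apply, smul_eq_mul]
      ring
    rw [h1, abs_mul]
    have := abs_add_le (W x1 i) (W x2 i)
    rw [abs_of_pos (by norm_num : (0:ℝ) < 1/2)]
    linarith
  have hsum : ∑ i, |W xm i| ≤ (s1 + s2) / 2 := by
    calc ∑ i, |W xm i| ≤ ∑ i, (|W x1 i| + |W x2 i|) / 2 :=
          Finset.sum_le_sum fun i _ => hWm i
      _ = (s1 + s2) / 2 := by
          rw [hs1, hs2, ← Finset.sum_add_distrib, Finset.sum_div]
  have hnorm : ‖A xm - y‖^2 = (2*‖a‖^2 + 2*‖b‖^2 - ‖a - b‖^2) / 4 := by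
    rw [hAm, norm_smul]
    have hpar : ‖a + b‖^2 + ‖a - b‖^2 = 2*‖a‖^2 + 2*‖b‖^2 := by
      have := norm_add_sq_real a b
      have := norm_sub_sq_real a b
      linarith
    simp only [norm_div, Real.norm_eq_abs, mul_pow]
    norm_num
    nlinarith
  have hkey := hmin1 xm
  have hle : ‖a‖^2 + α * s1 ≤ (2*‖a‖^2 + 2*‖b‖^2 - ‖a - b‖^2) / 4 + α * ((s1 + s2) / 2) := by
    calc ‖a‖^2 + α * s1 ≤ ‖A xm - y‖^2 + α * ∑ i, |W xm i| := hkey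
      _ ≤ (2*‖a‖^2 + 2*‖b‖^2 - ‖a - b‖^2) / 4 + α * ((s1 + s2) / 2) := by
          rw [hnorm]
          gcongr
  have hab : ‖a - b‖^2 ≤ 0 := by nlinarith
  have hab0 : a - b = 0 := by
    have h0 : ‖a - b‖^2 = 0 := le_antisymm hab (sq_nonneg _)
    have h1 : ‖a - b‖ = 0 := by
      have := sq_eq_zero_iff.mp h0
      exact this
    exact norm_eq_zero.mp h1
  have hAeq : A x1 = A x2 := by
    have : a = b := sub_eq_zero.mp hab0
    rw [ha, hb] at this
    have := congrArg (· + y) this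
    simpa using this
  refine ⟨hAeq, ?_⟩
  have hna : ‖a‖ = ‖b‖ := by rw [ha, hb, hAeq]
  have : α * s1 = α * s2 := by rw [hna] at hobj; linarith
  exact mul_left_cancel₀ (ne_of_gt hα) this
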